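/- Let p ≡ 1 (mod 8) and q ≡ 7 (mod 8) be primes with (p/q) = −1, and write the fundamental unit ε_{pq} = v + w√(pq) of Q(√(pq)) with integers v, w. Then v + 1 is a perfect square in ℕ, and there exist integers w₁, w₂ with w = w₁·w₂ such that 2ε_{pq} = (w₁ + w₂√(pq))² and 2 = w₁² − pq·w₂². -/

import Mathlib

noncomputable section

/-- `x + y√d` is an algebraic integer of `ℚ(√d)`:
either `x, y` are both integers, or `d ≡ 1 (mod 4)` and `x, y` are both half-integers. -/
def IsQuadInt (d : ℤ) (x y : ℚ) : Prop :=
  (∃ a b : ℤ, x = a ∧ y = b) ∨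
  (d % 4 = 1 ∧ ∃ a b : ℤ, x = a + 1/2 ∧ y = b + 1/2)

/-- `x + y√d` is the fundamental unit of the real quadratic field `ℚ(√d)`:
it is an algebraic integer of norm `±1`, greater than `1`, and minimal with
these properties. -/
def IsFundUnit (d : ℤ) (x y : ℚ) : Prop :=
  IsQuadInt d x y ∧ (x ^ 2 - d * y ^ 2 = 1 ∨ x ^ 2 - d * y ^ 2 = -1) ∧
  1 < (x : ℝ) + y * Real.sqrt d ∧
  ∀ x' y' : ℚ, IsQuadInt d x' y' →
    (x' ^ 2 - d * y' ^ 2 = 1 ∨ x' ^ 2 - d * y' ^ 2 = -1) →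
    1 < (x' : ℝ) + y' * Real.sqrt d →
    (x : ℝ) + y * Real.sqrt d ≤ (x' : ℝ) + y' * Real.sqrt d

private lemma pos_sq' {r : ℤ} (hr : 0 < r) (h : ∃ a : ℤ, r = a ^ 2 ∨ r = -a ^ 2) :
    ∃ a : ℤ, r = a ^ 2 := by
  obtain ⟨a, ha | ha⟩ := h
  · exact ⟨a, ha⟩
  · exfalso; nlinarith [sq_nonneg a]

private lemma split_pq {p q : ℤ} (hp : Prime p) (hq : Prime q) (hppos : 0 < p) (hqpos : 0 < q)
    (hcopq : IsCoprime p q) {r s t : ℤ} (hr : 0 < r) (hs : 0 < s) (hco : IsCoprime r s)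
    (h : r * s = p * q * t ^ 2) :
    (∃ a b : ℤ, r = a ^ 2 ∧ s = p * q * b ^ 2) ∨
    (∃ a b : ℤ, r = p * q * a ^ 2 ∧ s = b ^ 2) ∨
    (∃ a b : ℤ, r = p * a ^ 2 ∧ s = q * b ^ 2) ∨
    (∃ a b : ℤ, r = q * a ^ 2 ∧ s = p * b ^ 2) := by
  have hp0 : p ≠ 0 := hp.ne_zero
  have hq0 : q ≠ 0 := hq.ne_zero
  have hpdvd : p ∣ r * s := ⟨q * t ^ 2, by rw [h]; ring⟩
  have hqdvd : q ∣ r * s := ⟨p * t ^ 2, by rw [h]; ring⟩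
  rcases hp.dvd_mul.mp hpdvd with hpr | hps <;> rcases hq.dvd_mul.mp hqdvd with hqr | hqs
  · obtain ⟨r₁, hr₁⟩ := hcopq.mul_dvd hpr hqr
    have hr₁pos : 0 < r₁ := by nlinarith [mul_pos hppos hqpos]
    have hcan : r₁ * s = t ^ 2 := by
      have h4 : (p * q) * (r₁ * s) = (p * q) * t ^ 2 := by rw [← h, hr₁]; ring
      exact mul_left_cancel₀ (mul_ne_zero hp0 hq0) h4
    have hco₁ : IsCoprime r₁ s := hco.of_isCoprime_of_dvd_left ⟨p * q, by rw [hr₁]; ring⟩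
    obtain ⟨a, ha⟩ := pos_sq' hr₁pos (Int.sq_of_isCoprime hco₁ hcan)
    obtain ⟨b, hb⟩ := pos_sq' hs (Int.sq_of_isCoprime hco₁.symm (by rw [← hcan]; ring))
    exact Or.inr (Or.inl ⟨a, b, by rw [hr₁, ha], hb⟩)
  · obtain ⟨r₁, hr₁⟩ := hpr
    obtain ⟨s₁, hs₁⟩ := hqs
    have hr₁pos : 0 < r₁ := by nlinarith
    have hs₁pos : 0 < s₁ := by nlinarith
    have hcan : r₁ * s₁ = t ^ 2 := by
      have h4 : (p * q) * (r₁ * s₁) = (p * q) * t ^ 2 := by rw [← h, hr₁, hs₁]; ring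
      exact mul_left_cancel₀ (mul_ne_zero hp0 hq0) h4
    have hco₁ : IsCoprime r₁ s₁ :=
      (hco.of_isCoprime_of_dvd_left ⟨p, by rw [hr₁]; ring⟩).of_isCoprime_of_dvd_right
        ⟨q, by rw [hs₁]; ring⟩
    obtain ⟨a, ha⟩ := pos_sq' hr₁pos (Int.sq_of_isCoprime hco₁ hcan)
    obtain ⟨b, hb⟩ := pos_sq' hs₁pos (Int.sq_of_isCoprime hco₁.symm (by rw [← hcan]; ring))
    exact Or.inr (Or.inr (Or.inl ⟨a, b, by rw [hr₁, ha], by rw [hs₁, hb]⟩))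
  · obtain ⟨r₁, hr₁⟩ := hqr
    obtain ⟨s₁, hs₁⟩ := hps
    have hr₁pos : 0 < r₁ := by nlinarith
    have hs₁pos : 0 < s₁ := by nlinarith
    have hcan : r₁ * s₁ = t ^ 2 := by
      have h4 : (p * q) * (r₁ * s₁) = (p * q) * t ^ 2 := by rw [← h, hr₁, hs₁]; ring
      exact mul_left_cancel₀ (mul_ne_zero hp0 hq0) h4
    have hco₁ : IsCoprime r₁ s₁ :=
      (hco.of_isCoprime_of_dvd_left ⟨q, by rw [hr₁]; ring⟩).of_isCoprime_of_dvd_right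
        ⟨p, by rw [hs₁]; ring⟩
    obtain ⟨a, ha⟩ := pos_sq' hr₁pos (Int.sq_of_isCoprime hco₁ hcan)
    obtain ⟨b, hb⟩ := pos_sq' hs₁pos (Int.sq_of_isCoprime hco₁.symm (by rw [← hcan]; ring))
    exact Or.inr (Or.inr (Or.inr ⟨a, b, by rw [hr₁, ha], by rw [hs₁, hb]⟩))
  · obtain ⟨s₁, hs₁⟩ := hcopq.mul_dvd hps hqs
    have hs₁pos : 0 < s₁ := by nlinarith [mul_pos hppos hqpos]
    have hcan : r * s₁ = t ^ 2 := by
      have h4 : (p * q) * (r * s₁) = (p * q) * t ^ 2 := by rw [← h, hs₁]; ring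
      exact mul_left_cancel₀ (mul_ne_zero hp0 hq0) h4
    have hco₁ : IsCoprime r s₁ := hco.of_isCoprime_of_dvd_right ⟨p * q, by rw [hs₁]; ring⟩
    obtain ⟨a, ha⟩ := pos_sq' hr (Int.sq_of_isCoprime hco₁ hcan)
    obtain ⟨b, hb⟩ := pos_sq' hs₁pos (Int.sq_of_isCoprime hco₁.symm (by rw [← hcan]; ring))
    exact Or.inl ⟨a, b, ha, by rw [hs₁, hb]⟩

private lemma sq_shift {F : Type*} [Field F] {k x c : F} (hx : x ≠ 0) (hc : IsSquare c)
    (h : k * x ^ 2 = c) : IsSquare k := by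
  obtain ⟨r, hr⟩ := hc
  refine ⟨r / x, ?_⟩
  field_simp
  linear_combination h + hr

set_option maxHeartbeats 1000000 in
/-- If `p ≡ 1 (mod 8)` and `q ≡ 7 (mod 8)` are primes with `(p/q) = −1`, and
`ε_{pq} = v + w√(pq)` is the fundamental unit of `ℚ(√(pq))` with `v, w ∈ ℤ`,
then `v + 1` is a perfect square and there are integers `w₁, w₂` with `w = w₁w₂`,
`2ε_{pq} = (w₁ + w₂√(pq))²` and `2 = w₁² − pq·w₂²`. -/
theorem sqrt_two_eps_pq (p q : ℕ) [Fact p.Prime] [Fact q.Prime]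
    (hp : p % 8 = 1) (hq : q % 8 = 7) (hleg : legendreSym q p = -1)
    (v w : ℤ) (h : IsFundUnit (p * q) (v : ℚ) (w : ℚ)) :
    (∃ n : ℕ, v + 1 = (n : ℤ) ^ 2) ∧
    ∃ w₁ w₂ : ℤ, w = w₁ * w₂ ∧
      2 * ((v : ℝ) + (w : ℝ) * Real.sqrt (p * q)) =
        ((w₁ : ℝ) + (w₂ : ℝ) * Real.sqrt (p * q)) ^ 2 ∧
      (2 : ℤ) = w₁ ^ 2 - p * q * w₂ ^ 2 := by
  obtain ⟨hint, hnormQ, hgt, hmin⟩ := h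
  have hpp : Nat.Prime p := Fact.out
  have hqp : Nat.Prime q := Fact.out
  have hp2 : 2 ≤ p := hpp.two_le
  have hq2 : 2 ≤ q := hqp.two_le
  have hp9 : 9 ≤ p := by omega
  have hq7 : 7 ≤ q := by omega
  have hpne : p ≠ q := by omega
  have hpZ : Prime ((p : ℤ)) := Nat.prime_iff_prime_int.mp hpp
  have hqZ : Prime ((q : ℤ)) := Nat.prime_iff_prime_int.mp hqp
  have hcopq : IsCoprime ((p : ℤ)) ((q : ℤ)) :=
    Nat.Coprime.isCoprime ((Nat.coprime_primes hpp hqp).mpr hpne)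
  have hpq14 : (14 : ℤ) ≤ (p : ℤ) * q := by exact_mod_cast Nat.mul_le_mul hp2 hq7
  -- Legendre symbol facts
  have nsq_neg1 : ¬ IsSquare (-1 : ZMod q) := fun hs => by
    have := ZMod.exists_sq_eq_neg_one_iff.mp hs; omega
  have sq2q : IsSquare (2 : ZMod q) := (ZMod.exists_sq_eq_two_iff (by omega)).mpr (Or.inr hq)
  have nsq_neg2 : ¬ IsSquare (-2 : ZMod q) := fun hs => by
    have := (ZMod.exists_sq_eq_neg_two_iff (by omega)).mp hs; omega
  have sq2p : IsSquare (2 : ZMod p) := (ZMod.exists_sq_eq_two_iff (by omega)).mpr (Or.inl hp)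
  have nsq_pq : ¬ IsSquare ((p : ZMod q)) := (legendreSym.eq_neg_one_iff' q).mp hleg
  have nsq_qp : ¬ IsSquare ((q : ZMod p)) := by
    have h := legendreSym.quadratic_reciprocity_one_mod_four (p := p) (q := q) (by omega) (by omega)
    rw [hleg] at h
    exact (legendreSym.eq_neg_one_iff' p).mp h.symm
  have h2q0 : (2 : ZMod q) ≠ 0 := by
    intro h0
    have : q ∣ 2 := by
      have := (ZMod.natCast_eq_zero_iff 2 q).mp (by exact_mod_cast h0)
      exact this
    have := Nat.le_of_dvd (by norm_num) this
    omega
  have h2p0 : (2 : ZMod p) ≠ 0 := by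
    intro h0
    have : p ∣ 2 := by
      have := (ZMod.natCast_eq_zero_iff 2 p).mp (by exact_mod_cast h0)
      exact this
    have := Nat.le_of_dvd (by norm_num) this
    omega
  have h1q0 : (1 : ZMod q) ≠ 0 := one_ne_zero
  have h1p0 : (1 : ZMod p) ≠ 0 := one_ne_zero
  -- the norm equation over ℤ, ruling out norm −1
  have hnorm : v ^ 2 - (p : ℤ) * q * w ^ 2 = 1 := by
    rcases hnormQ with h1 | h1
    · exact_mod_cast h1
    · exfalso
      have hzz : v ^ 2 - (p : ℤ) * q * w ^ 2 = -1 := by exact_mod_cast h1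
      have hc := congrArg (fun z : ℤ => (z : ZMod q)) hzz
      push_cast at hc
      rw [ZMod.natCast_self] at hc
      exact nsq_neg1 ⟨(v : ZMod q), by linear_combination - hc⟩
  -- real facts
  have hcastd : (((p : ℤ) * (q : ℤ) : ℤ) : ℝ) = ((p : ℕ) : ℝ) * ((q : ℕ) : ℝ) := by push_cast; ring
  rw [hcastd] at hgt
  push_cast at hgt
  set S := Real.sqrt (((p : ℕ) : ℝ) * ((q : ℕ) : ℝ)) with hSdef
  have hDpos : (0 : ℝ) < ((p : ℕ) : ℝ) * ((q : ℕ) : ℝ) := by positivity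
  have hS2 : S ^ 2 = ((p : ℕ) : ℝ) * ((q : ℕ) : ℝ) := Real.sq_sqrt hDpos.le
  have hSpos : 0 < S := Real.sqrt_pos.mpr hDpos
  have hS3 : 3 < S := by
    have h14 : (14 : ℝ) ≤ ((p : ℕ) : ℝ) * ((q : ℕ) : ℝ) := by exact_mod_cast hpq14
    nlinarith
  have hunit : (((v : ℝ)) + (w : ℝ) * S) * (((v : ℝ)) - (w : ℝ) * S) = 1 := by
    have hn : ((v : ℝ)) ^ 2 - (((p : ℕ) : ℝ) * ((q : ℕ) : ℝ)) * ((w : ℝ)) ^ 2 = 1 := by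
      exact_mod_cast hnorm
    nlinarith [hS2]
  have hxpos : (0 : ℝ) < ((v : ℝ)) + (w : ℝ) * S := by linarith
  have hlow : 0 < ((v : ℝ)) - (w : ℝ) * S := by
    rcases lt_or_ge 0 (((v : ℝ)) - (w : ℝ) * S) with h' | h'
    · exact h'
    · exfalso; nlinarith [mul_nonpos_of_nonneg_of_nonpos hxpos.le h']
  have hhigh : ((v : ℝ)) - (w : ℝ) * S < 1 := by
    nlinarith [mul_pos (sub_pos.mpr hgt) hlow]
  have hvpos : 0 < v := by
    have : (0 : ℝ) < (v : ℝ) := by nlinarith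
    exact_mod_cast this
  have hwpos : 0 < w := by
    have hws : 0 < (w : ℝ) * S := by nlinarith
    have : (0 : ℝ) < (w : ℝ) := by
      rcases le_or_gt ((w : ℝ)) 0 with hw0 | hw0
      · nlinarith
      · exact hw0
    exact_mod_cast this
  have hw2 : (1 : ℤ) ≤ w ^ 2 := by nlinarith
  have h15 : (15 : ℤ) ≤ v ^ 2 := by nlinarith
  have hv3 : 3 ≤ v := by nlinarith
  have key : (v + 1) * (v - 1) = (p : ℤ) * q * w ^ 2 := by linear_combination hnorm
  rcases Int.even_or_odd v with hve | hvo
  · -- v even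
    obtain ⟨k, hk⟩ := hve
    have hco : IsCoprime (v + 1) (v - 1) := ⟨k, -(k + 1), by rw [hk]; ring⟩
    rcases split_pq hpZ hqZ (by positivity) (by positivity) hcopq
        (show (0 : ℤ) < v + 1 by omega) (show (0 : ℤ) < v - 1 by omega) hco key with
      ⟨a, b, ha, hb⟩ | ⟨a, b, ha, hb⟩ | ⟨a, b, ha, hb⟩ | ⟨a, b, ha, hb⟩
    · -- good case : v+1 = a², v−1 = pq b²
      obtain ⟨A, hA0, hAa⟩ : ∃ A : ℤ, 0 ≤ A ∧ A ^ 2 = a ^ 2 := ⟨|a|, abs_nonneg a, sq_abs a⟩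
      obtain ⟨B, hB0, hBb⟩ : ∃ B : ℤ, 0 ≤ B ∧ B ^ 2 = b ^ 2 := ⟨|b|, abs_nonneg b, sq_abs b⟩
      have hA2 : A ^ 2 = v + 1 := by rw [hAa]; exact ha.symm
      have hB2 : (p : ℤ) * q * B ^ 2 = v - 1 := by rw [hBb]; exact hb.symm
      have hcanc : ((p : ℤ) * q) * (A * B) ^ 2 = ((p : ℤ) * q) * w ^ 2 := by
        have hab2 : (A * B) ^ 2 = a ^ 2 * b ^ 2 := by rw [mul_pow, hAa, hBb]
        rw [hab2]; linear_combination key - (v - 1) * ha - a ^ 2 * hb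
      have hwAB : w = A * B := by
        have h0 : (w - A * B) * (w + A * B) = 0 := by
          have := mul_left_cancel₀ (show ((p : ℤ) * q) ≠ 0 by positivity) hcanc
          linear_combination - this
        rcases mul_eq_zero.mp h0 with h1 | h1
        · linarith
        · exfalso; nlinarith [mul_nonneg hA0 hB0]
      refine ⟨⟨A.toNat, ?_⟩, A, B, hwAB, ?_, ?_⟩
      · rw [Int.toNat_of_nonneg hA0, hA2]
      · have hA2r : ((A : ℤ) : ℝ) ^ 2 = (v : ℝ) + 1 := by exact_mod_cast hA2
        have hB2r : ((p : ℕ) : ℝ) * ((q : ℕ) : ℝ) * ((B : ℤ) : ℝ) ^ 2 = (v : ℝ) - 1 := by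
          exact_mod_cast hB2
        have hwr : ((w : ℤ) : ℝ) = ((A : ℤ) : ℝ) * ((B : ℤ) : ℝ) := by exact_mod_cast hwAB
        linear_combination 2 * S * hwr - hA2r - ((B : ℤ) : ℝ) ^ 2 * hS2 - hB2r
      · linear_combination hB2 - hA2
    · -- v+1 = pq a², v−1 = b² : contradiction mod q via −2
      exfalso
      have hZ : b ^ 2 = (p : ℤ) * q * a ^ 2 - 2 := by linear_combination ha - hb
      have hc := congrArg (fun z : ℤ => (z : ZMod q)) hZ
      push_cast at hc
      rw [ZMod.natCast_self] at hc
      exact nsq_neg2 ⟨(b : ZMod q), by linear_combination - hc⟩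
    · -- v+1 = p a², v−1 = q b² : contradiction mod q via 2
      exfalso
      have hZ : (p : ℤ) * a ^ 2 - (q : ℤ) * b ^ 2 = 2 := by linear_combination hb - ha
      have hc := congrArg (fun z : ℤ => (z : ZMod q)) hZ
      push_cast at hc
      rw [ZMod.natCast_self] at hc
      have ha0 : ((a : ℤ) : ZMod q) ≠ 0 := by
        intro h0
        rw [h0] at hc
        exact h2q0 (by linear_combination - hc)
      exact nsq_pq (sq_shift ha0 sq2q (by linear_combination hc))
    · -- v+1 = q a², v−1 = p b² : contradiction mod p via 2
      exfalso
      have hZ : (q : ℤ) * a ^ 2 - (p : ℤ) * b ^ 2 = 2 := by linear_combination hb - ha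
      have hc := congrArg (fun z : ℤ => (z : ZMod p)) hZ
      push_cast at hc
      rw [ZMod.natCast_self] at hc
      have ha0 : ((a : ℤ) : ZMod p) ≠ 0 := by
        intro h0
        rw [h0] at hc
        exact h2p0 (by linear_combination - hc)
      exact nsq_qp (sq_shift ha0 sq2p (by linear_combination hc))
  · -- v odd
    obtain ⟨m, hm⟩ := hvo
    have hm1 : 1 ≤ m := by omega
    -- w is even
    have hwe : (2 : ℤ) ∣ w := by
      have h2 : (2 : ℤ) ∣ (p : ℤ) * q * w ^ 2 :=
        ⟨2 * (m + 1) * m, by rw [← key, hm]; ring⟩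
      rcases (Int.prime_two.dvd_mul.mp h2) with h3 | h3
      · exfalso
        have h4 : (2 : ℕ) ∣ p * q := by exact_mod_cast h3
        rcases (Nat.Prime.dvd_mul Nat.prime_two).mp h4 with h5 | h5 <;> omega
      · rw [sq] at h3
        exact (Int.prime_two.dvd_mul.mp h3).elim id id
    obtain ⟨w', hw'⟩ := hwe
    have key2 : (m + 1) * m = (p : ℤ) * q * w' ^ 2 := by
      have h4 : (4 : ℤ) * ((m + 1) * m) = 4 * ((p : ℤ) * q * w' ^ 2) := by
        rw [hm, hw'] at key
        linear_combination key
      exact mul_left_cancel₀ (by norm_num) h4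
    have hco : IsCoprime (m + 1) m := ⟨1, -1, by ring⟩
    rcases split_pq hpZ hqZ (by positivity) (by positivity) hcopq
        (show (0 : ℤ) < m + 1 by omega) (show (0 : ℤ) < m by omega) hco key2 with
      ⟨a, b, ha, hb⟩ | ⟨a, b, ha, hb⟩ | ⟨a, b, ha, hb⟩ | ⟨a, b, ha, hb⟩
    · -- m+1 = a², m = pq b² : contradiction with minimality of the fundamental unit
      exfalso
      obtain ⟨A, hA0, hAa⟩ : ∃ A : ℤ, 0 ≤ A ∧ A ^ 2 = a ^ 2 := ⟨|a|, abs_nonneg a, sq_abs a⟩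
      obtain ⟨B, hB0, hBb⟩ : ∃ B : ℤ, 0 ≤ B ∧ B ^ 2 = b ^ 2 := ⟨|b|, abs_nonneg b, sq_abs b⟩
      have hA2 : A ^ 2 = m + 1 := by rw [hAa]; exact ha.symm
      have hB2 : (p : ℤ) * q * B ^ 2 = m := by rw [hBb]; exact hb.symm
      have hA1 : 1 ≤ A := by
        rcases eq_or_lt_of_le hA0 with h0 | h0
        · exfalso; rw [← h0] at hA2; simp at hA2; omega
        · omega
      have hB1 : 1 ≤ B := by
        rcases eq_or_lt_of_le hB0 with h0 | h0
        · exfalso; rw [← h0] at hB2; simp at hB2; omega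
        · omega
      have hw'pos : 0 < w' := by omega
      have hcanc : ((p : ℤ) * q) * (A * B) ^ 2 = ((p : ℤ) * q) * w' ^ 2 := by
        have hab2 : (A * B) ^ 2 = a ^ 2 * b ^ 2 := by rw [mul_pow, hAa, hBb]
        rw [hab2]; linear_combination key2 - m * ha - a ^ 2 * hb
      have hwAB : w' = A * B := by
        have h0 : (w' - A * B) * (w' + A * B) = 0 := by
          have := mul_left_cancel₀ (show ((p : ℤ) * q) ≠ 0 by positivity) hcanc
          linear_combination - this
        rcases mul_eq_zero.mp h0 with h1 | h1
        · linarith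
        · exfalso; nlinarith [mul_nonneg hA0 hB0]
      have hnormZ : A ^ 2 - (p : ℤ) * q * B ^ 2 = 1 := by rw [hA2, hB2]; ring
      have hquad : IsQuadInt ((p : ℤ) * q) ((A : ℤ) : ℚ) ((B : ℤ) : ℚ) :=
        Or.inl ⟨A, B, rfl, rfl⟩
      have hnorm' : ((A : ℤ) : ℚ) ^ 2 - (((p : ℤ) * q : ℤ) : ℚ) * ((B : ℤ) : ℚ) ^ 2 = 1 := by
        exact_mod_cast hnormZ
      have hA1r : (1 : ℝ) ≤ ((A : ℤ) : ℝ) := by exact_mod_cast hA1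
      have hB1r : (1 : ℝ) ≤ ((B : ℤ) : ℝ) := by exact_mod_cast hB1
      have hgt'' : 1 < (((A : ℤ) : ℚ) : ℝ) + (((B : ℤ) : ℚ) : ℝ) * Real.sqrt (((p : ℤ) * (q : ℤ) : ℤ) : ℝ) := by
        rw [hcastd]
        push_cast
        nlinarith
      have hle := hmin ((A : ℤ) : ℚ) ((B : ℤ) : ℚ) hquad (Or.inl hnorm') hgt''
      rw [hcastd] at hle
      push_cast at hle
      have hA2r : ((A : ℤ) : ℝ) ^ 2 = (m : ℝ) + 1 := by exact_mod_cast hA2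
      have hB2r : ((p : ℕ) : ℝ) * ((q : ℕ) : ℝ) * ((B : ℤ) : ℝ) ^ 2 = (m : ℝ) := by
        exact_mod_cast hB2
      have hwr : ((w : ℤ) : ℝ) = 2 * (((A : ℤ) : ℝ) * ((B : ℤ) : ℝ)) := by
        have : w = 2 * (A * B) := by rw [hw', hwAB]
        exact_mod_cast this
      have hvr : ((v : ℤ) : ℝ) = 2 * (m : ℝ) + 1 := by exact_mod_cast hm
      have hsqeq : ((v : ℝ)) + (w : ℝ) * S = (((A : ℤ) : ℝ) + ((B : ℤ) : ℝ) * S) ^ 2 := by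
        linear_combination hvr + S * hwr - hA2r - ((B : ℤ) : ℝ) ^ 2 * hS2 - hB2r
      rw [hsqeq] at hle
      nlinarith
    · -- m+1 = pq a², m = b² : contradiction mod q via −1
      exfalso
      have hZ : b ^ 2 = (p : ℤ) * q * a ^ 2 - 1 := by linear_combination ha - hb
      have hc := congrArg (fun z : ℤ => (z : ZMod q)) hZ
      push_cast at hc
      rw [ZMod.natCast_self] at hc
      exact nsq_neg1 ⟨(b : ZMod q), by linear_combination - hc⟩
    · -- m+1 = p a², m = q b² : contradiction mod q via 1
      exfalso
      have hZ : (p : ℤ) * a ^ 2 - (q : ℤ) * b ^ 2 = 1 := by linear_combination hb - ha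
      have hc := congrArg (fun z : ℤ => (z : ZMod q)) hZ
      push_cast at hc
      rw [ZMod.natCast_self] at hc
      have ha0 : ((a : ℤ) : ZMod q) ≠ 0 := by
        intro h0
        rw [h0] at hc
        exact h1q0 (by linear_combination - hc)
      exact nsq_pq (sq_shift ha0 IsSquare.one (by linear_combination hc))
    · -- m+1 = q a², m = p b² : contradiction mod p via 1
      exfalso
      have hZ : (q : ℤ) * a ^ 2 - (p : ℤ) * b ^ 2 = 1 := by linear_combination hb - ha
      have hc := congrArg (fun z : ℤ => (z : ZMod p)) hZ
      push_cast at hc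
      rw [ZMod.natCast_self] at hc
      have ha0 : ((a : ℤ) : ZMod p) ≠ 0 := by
        intro h0
        rw [h0] at hc
        exact h1p0 (by linear_combination - hc)
      exact nsq_qp (sq_shift ha0 IsSquare.one (by linear_combination hc))
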